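/- For x : Fin n × V* → ZMod 2, one has H_E *ᵥ x = 0 if and only if there exists X : Fin n → K with H_q *ᵥ X = 0 and x(j,c) = Φ_E(X j)(c) for all j ∈ Fin n and c ∈ V*. In other words, the extended binary image C_E (the blockwise Φ_E image of the nullspace of H_q) equals the intersection of the nullspace of H_PM with the n-fold product of simplex codes, which is the nullspace of H_E. -/
import Mathlib


open Matrix

lemma zmod2_cases (a : ZMod 2) : a = 0 ∨ a = 1 := by revert a; decide
lemma zmod2_add_self (a : ZMod 2) : a + a = 0 := by revert a; decide
lemma zmod2_three (a b c : ZMod 2) (h : a + b + c = 0) : c = a + b := by revert a b c; decide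

lemma char2_eq_of_add_eq_zero {b : ℕ} (u v : Fin b → ZMod 2) (h : u + v = 0) : u = v := by
  funext i
  have := congrFun h i
  simp only [Pi.add_apply, Pi.zero_apply] at this
  revert this; generalize u i = a; generalize v i = c; revert a c; decide

lemma dot_nondegenerate {b : ℕ} (v : Fin b → ZMod 2)
    (hv : ∀ c : Fin b → ZMod 2, c ≠ 0 → c ⬝ᵥ v = 0) : v = 0 := by
  funext e
  have hs : (Pi.single e 1 : Fin b → ZMod 2) ≠ 0 := by
    intro h
    have := congrFun h e
    simp at this
  have := hv _ hs
  simpa [dotProduct, Pi.single_apply, ite_mul, Finset.sum_ite_eq] using this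

lemma additive_rep {b : ℕ} (f : (Fin b → ZMod 2) → ZMod 2)
    (hadd : ∀ u v, f (u+v) = f u + f v) (v : Fin b → ZMod 2) :
    f v = v ⬝ᵥ (fun e => f (Pi.single e 1)) := by
  let F : (Fin b → ZMod 2) →+ ZMod 2 := AddMonoidHom.mk' f hadd
  have hv : v = ∑ e : Fin b, v e • Pi.single e 1 := by
    funext i
    rw [Finset.sum_apply]
    simp [Pi.single_apply, Finset.sum_ite_eq]
  calc f v = F v := rfl
    _ = ∑ e : Fin b, F (v e • Pi.single e 1) := by rw [← map_sum, ← hv]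
    _ = ∑ e : Fin b, v e * F (Pi.single e 1) := by
        refine Finset.sum_congr rfl fun e _ => ?_
        rcases zmod2_cases (v e) with h | h <;> simp [h]
    _ = v ⬝ᵥ (fun e => f (Pi.single e 1)) := rfl

/-- For `x : Fin n × V* → ZMod 2`, one has `H_E *ᵥ x = 0` iff there is
`X : Fin n → K` with `H_q *ᵥ X = 0` and `x (j, c) = Φ_E (X j) c` for all `j, c`; i.e. the
extended binary image `C_E` (the blockwise `Φ_E` image of the nullspace of `H_q`, equal to
the intersection of the nullspace of `H_PM` with the `n`-fold product of simplex codes)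
is the nullspace of `H_E`. -/
theorem extended_binary_image_eq_nullspace (b m n : ℕ) (hb : 1 ≤ b)
    (ΦB : GaloisField 2 b ≃ₗ[ZMod 2] (Fin b → ZMod 2))
    (Ψm : GaloisField 2 b → Matrix (Fin b) (Fin b) (ZMod 2))
    (hΨm : ∀ (h x : GaloisField 2 b), Ψm h *ᵥ ΦB x = ΦB (h * x))
    (ΦE : GaloisField 2 b → ({v : Fin b → ZMod 2 // v ≠ 0} → ZMod 2))
    (hΦE : ∀ (X : GaloisField 2 b) (c : {v : Fin b → ZMod 2 // v ≠ 0}),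
      ΦE X c = ∑ e : Fin b, (c : Fin b → ZMod 2) e * ΦB X e)
    (Hq : Matrix (Fin m) (Fin n) (GaloisField 2 b))
    (HE : Matrix
      ((Fin m × {v : Fin b → ZMod 2 // v ≠ 0}) ⊕
        (Fin n × {v : Fin b → ZMod 2 // v ≠ 0} × {v : Fin b → ZMod 2 // v ≠ 0}))
      (Fin n × {v : Fin b → ZMod 2 // v ≠ 0}) (ZMod 2))
    -- the `H_PM` rows of `H_E`:
    (hHPM : ∀ (i : Fin m) (c : {v : Fin b → ZMod 2 // v ≠ 0}) (j : Fin n)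
        (c' : {v : Fin b → ZMod 2 // v ≠ 0}),
      HE (Sum.inl (i, c)) (j, c') = 1 ↔
        (Hq i j ≠ 0 ∧
          (c' : Fin b → ZMod 2) = (Ψm (Hq i j))ᵀ *ᵥ (c : Fin b → ZMod 2)))
    -- the simplex rows of `H_E`:
    (hHS : ∀ (j₀ : Fin n) (c₁ c₂ : {v : Fin b → ZMod 2 // v ≠ 0}) (j : Fin n)
        (c' : {v : Fin b → ZMod 2 // v ≠ 0}),
      HE (Sum.inr (j₀, c₁, c₂)) (j, c') = 1 ↔
        (j = j₀ ∧ c₁ ≠ c₂ ∧ (c₁ : Fin b → ZMod 2) + (c₂ : Fin b → ZMod 2) ≠ 0 ∧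
          (c' = c₁ ∨ c' = c₂ ∨
            (c' : Fin b → ZMod 2) = (c₁ : Fin b → ZMod 2) + (c₂ : Fin b → ZMod 2))))
    (x : Fin n × {v : Fin b → ZMod 2 // v ≠ 0} → ZMod 2) :
    HE *ᵥ x = 0 ↔
      ∃ X : Fin n → GaloisField 2 b, Hq *ᵥ X = 0 ∧
        ∀ (j : Fin n) (c : {v : Fin b → ZMod 2 // v ≠ 0}), x (j, c) = ΦE (X j) c := by
  classical
  -- multiplication matrices of nonzero field elements have invertible transposes
  have hΨinv : ∀ (h : GaloisField 2 b), h ≠ 0 → ∀ v : Fin b → ZMod 2,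
      Ψm h⁻¹ *ᵥ (Ψm h *ᵥ v) = v := by
    intro h hh v
    obtain ⟨y, rfl⟩ : ∃ y, ΦB y = v := ⟨ΦB.symm v, ΦB.apply_symm_apply v⟩
    rw [hΨm, hΨm, inv_mul_cancel_left₀ hh]
  have hΨTne : ∀ (h : GaloisField 2 b), h ≠ 0 → ∀ c : Fin b → ZMod 2, c ≠ 0 →
      (Ψm h)ᵀ *ᵥ c ≠ 0 := by
    intro h hh c hc hcon
    apply hc
    apply dot_nondegenerate
    intro c' _
    rw [dotProduct_comm]
    have h2 : Ψm h *ᵥ (Ψm h⁻¹ *ᵥ c') = c' := by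
      have := hΨinv h⁻¹ (inv_ne_zero hh) c'
      rwa [inv_inv] at this
    rw [← h2, Matrix.dotProduct_mulVec, ← Matrix.mulVec_transpose, hcon,
      zero_dotProduct]
  have hsumne : ∀ (c₁ c₂ : {v : Fin b → ZMod 2 // v ≠ 0}), c₁ ≠ c₂ →
      (c₁ : Fin b → ZMod 2) + (c₂ : Fin b → ZMod 2) ≠ 0 :=
    fun c₁ c₂ h h0 => h (Subtype.ext (char2_eq_of_add_eq_zero _ _ h0))
  have hent0 : ∀ r p, HE r p ≠ 1 → HE r p = 0 := fun r p h => (zmod2_cases _).resolve_right h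
  have hrowval : ∀ r, (HE *ᵥ x) r = ∑ p : Fin n × {v : Fin b → ZMod 2 // v ≠ 0},
      HE r p * x p := fun r => rfl
  -- value of the parity-matrix rows
  have hPMsum : ∀ (i : Fin m) (c : {v : Fin b → ZMod 2 // v ≠ 0}),
      (HE *ᵥ x) (Sum.inl (i, c)) = ∑ j : Fin n,
        if h : Hq i j = 0 then 0
        else x (j, ⟨(Ψm (Hq i j))ᵀ *ᵥ (c : Fin b → ZMod 2), hΨTne _ h _ c.2⟩) := by
    intro i c
    rw [hrowval, Fintype.sum_prod_type]
    refine Finset.sum_congr rfl fun j _ => ?_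
    by_cases hj : Hq i j = 0
    · rw [dif_pos hj]
      refine Finset.sum_eq_zero fun c' _ => ?_
      rw [hent0 _ _ (fun h1 => ((hHPM i c j c').1 h1).1 hj), zero_mul]
    · rw [dif_neg hj]
      rw [Finset.sum_eq_single (⟨(Ψm (Hq i j))ᵀ *ᵥ (c : Fin b → ZMod 2),
        hΨTne _ hj _ c.2⟩ : {v : Fin b → ZMod 2 // v ≠ 0})]
      · rw [(hHPM i c j _).2 ⟨hj, rfl⟩, one_mul]
      · intro c' _ hne
        rw [hent0 _ _ (fun h1 => hne (Subtype.ext ((hHPM i c j c').1 h1).2)), zero_mul]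
      · intro h; exact absurd (Finset.mem_univ _) h
  -- value of the simplex rows
  have hSsum : ∀ (j₀ : Fin n) (c₁ c₂ : {v : Fin b → ZMod 2 // v ≠ 0}),
      (HE *ᵥ x) (Sum.inr (j₀, c₁, c₂)) = if h : c₁ = c₂ then 0
        else x (j₀, c₁) + x (j₀, c₂) +
          x (j₀, ⟨(c₁ : Fin b → ZMod 2) + (c₂ : Fin b → ZMod 2), hsumne c₁ c₂ h⟩) := by
    intro j₀ c₁ c₂
    by_cases h12 : c₁ = c₂
    · rw [dif_pos h12, hrowval]
      refine Finset.sum_eq_zero fun p _ => ?_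
      rw [hent0 _ _ (fun h1 => ((hHS j₀ c₁ c₂ p.1 p.2).1 h1).2.1 h12), zero_mul]
    · rw [dif_neg h12, hrowval, Fintype.sum_prod_type]
      set c₃ : {v : Fin b → ZMod 2 // v ≠ 0} :=
        ⟨(c₁ : Fin b → ZMod 2) + (c₂ : Fin b → ZMod 2), hsumne c₁ c₂ h12⟩ with hc₃
      have h13 : c₁ ≠ c₃ := by
        intro h
        apply c₂.2
        have := congrArg Subtype.val h
        rw [hc₃] at this
        have h2 := congrArg (fun z => z - (c₁ : Fin b → ZMod 2)) this
        simpa using h2.symm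
      have h23 : c₂ ≠ c₃ := by
        intro h
        apply c₁.2
        have := congrArg Subtype.val h
        rw [hc₃] at this
        have h2 := congrArg (fun z => z - (c₂ : Fin b → ZMod 2)) this
        simpa [add_comm] using h2.symm
      have hentS : ∀ c', HE (Sum.inr (j₀, c₁, c₂)) (j₀, c') =
          if c' ∈ ({c₁, c₂, c₃} : Finset _) then 1 else 0 := by
        intro c'
        by_cases hc' : c' ∈ ({c₁, c₂, c₃} : Finset _)
        · rw [if_pos hc']
          simp only [Finset.mem_insert, Finset.mem_singleton] at hc'
          refine (hHS j₀ c₁ c₂ j₀ c').2 ⟨rfl, h12, hsumne c₁ c₂ h12, ?_⟩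
          rcases hc' with h | h | h
          · exact Or.inl h
          · exact Or.inr (Or.inl h)
          · exact Or.inr (Or.inr (by rw [h, hc₃]))
        · rw [if_neg hc']
          refine hent0 _ _ fun h1 => hc' ?_
          rcases ((hHS j₀ c₁ c₂ j₀ c').1 h1).2.2.2 with h | h | h
          · simp [h]
          · simp [h]
          · have : c' = c₃ := Subtype.ext (by rw [h, hc₃])
            simp [this]
      rw [Finset.sum_eq_single j₀]
      · have step1 : ∑ c' : {v : Fin b → ZMod 2 // v ≠ 0},
            HE (Sum.inr (j₀, c₁, c₂)) (j₀, c') * x (j₀, c') =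
            ∑ c' ∈ ({c₁, c₂, c₃} : Finset _), x (j₀, c') := by
          rw [← Finset.sum_subset (Finset.subset_univ ({c₁, c₂, c₃} : Finset _))
            (fun c' _ hc' => by rw [hentS, if_neg hc', zero_mul])]
          refine Finset.sum_congr rfl fun c' hc' => ?_
          rw [hentS, if_pos hc', one_mul]
        rw [step1, Finset.sum_insert (by simp [h12, h13]),
          Finset.sum_insert (by simp [h23]), Finset.sum_singleton, ← add_assoc]
      · intro j _ hj
        refine Finset.sum_eq_zero fun c' _ => ?_
        rw [hent0 _ _ (fun h1 => hj ((hHS j₀ c₁ c₂ j c').1 h1).1), zero_mul]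
      · intro h; exact absurd (Finset.mem_univ _) h
  -- value of the PM row sum when x comes from a vector X
  have hval : ∀ (X : Fin n → GaloisField 2 b),
      (∀ (j : Fin n) (c : {v : Fin b → ZMod 2 // v ≠ 0}),
        x (j, c) = (c : Fin b → ZMod 2) ⬝ᵥ ΦB (X j)) →
      ∀ (i : Fin m) (c : {v : Fin b → ZMod 2 // v ≠ 0}),
        (∑ j : Fin n, if h : Hq i j = 0 then 0
          else x (j, ⟨(Ψm (Hq i j))ᵀ *ᵥ (c : Fin b → ZMod 2), hΨTne _ h _ c.2⟩)) =
        (c : Fin b → ZMod 2) ⬝ᵥ ΦB ((Hq *ᵥ X) i) := by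
    intro X hx i c
    have hterm : ∀ j : Fin n, (if h : Hq i j = 0 then 0
        else x (j, ⟨(Ψm (Hq i j))ᵀ *ᵥ (c : Fin b → ZMod 2), hΨTne _ h _ c.2⟩)) =
        (c : Fin b → ZMod 2) ⬝ᵥ ΦB (Hq i j * X j) := by
      intro j
      by_cases hj : Hq i j = 0
      · rw [dif_pos hj, hj, zero_mul, map_zero, dotProduct_zero]
      · rw [dif_neg hj, hx, ← hΨm, Matrix.dotProduct_mulVec, ← Matrix.mulVec_transpose]
    rw [Finset.sum_congr rfl (fun j _ => hterm j)]
    have : (Hq *ᵥ X) i = ∑ j : Fin n, Hq i j * X j := rfl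
    rw [this, map_sum]
    simp only [dotProduct, Finset.sum_apply, Finset.mul_sum]
    rw [Finset.sum_comm]
  constructor
  · -- forward direction
    intro hx0
    have hrow0 : ∀ r, (HE *ᵥ x) r = 0 := fun r => congrFun hx0 r
    set g : Fin n → (Fin b → ZMod 2) → ZMod 2 :=
      fun j v => if h : v = 0 then 0 else x (j, ⟨v, h⟩) with hg
    have hgadd : ∀ j u v, g j (u + v) = g j u + g j v := by
      intro j u v
      by_cases hu : u = 0
      · simp [hg, hu]
      by_cases hv : v = 0
      · simp [hg, hv]
      by_cases huv : u = v
      · subst huv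
        have h0 : u + u = 0 := by funext i; exact zmod2_add_self _
        simp only [hg]
        rw [dif_pos h0, dif_neg hu]
        exact (zmod2_add_self _).symm
      · have hs : u + v ≠ 0 := fun h => huv (char2_eq_of_add_eq_zero u v h)
        have hne : (⟨u, hu⟩ : {v : Fin b → ZMod 2 // v ≠ 0}) ≠ ⟨v, hv⟩ :=
          fun h => huv (congrArg Subtype.val h)
        have hrow := hrow0 (Sum.inr (j, ⟨u, hu⟩, ⟨v, hv⟩))
        rw [hSsum j ⟨u, hu⟩ ⟨v, hv⟩, dif_neg hne] at hrow
        simp only [hg]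
        rw [dif_neg hs, dif_neg hu, dif_neg hv]
        exact zmod2_three _ _ _ hrow
    set X : Fin n → GaloisField 2 b :=
      fun j => ΦB.symm (fun e => g j (Pi.single e 1)) with hX
    have hΦBX : ∀ j, ΦB (X j) = fun e => g j (Pi.single e 1) :=
      fun j => ΦB.apply_symm_apply _
    have hxd : ∀ (j : Fin n) (c : {v : Fin b → ZMod 2 // v ≠ 0}),
        x (j, c) = (c : Fin b → ZMod 2) ⬝ᵥ ΦB (X j) := by
      intro j c
      have h1 : x (j, c) = g j (c : Fin b → ZMod 2) := by
        simp only [hg]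
        rw [dif_neg c.2]
      rw [h1, additive_rep (g j) (hgadd j) (c : Fin b → ZMod 2), hΦBX]
    have hXnull : Hq *ᵥ X = 0 := by
      funext i
      have hΦ0 : ΦB ((Hq *ᵥ X) i) = 0 := by
        apply dot_nondegenerate
        intro c hc
        have hrow := hrow0 (Sum.inl (i, ⟨c, hc⟩))
        rw [hPMsum, hval X hxd i ⟨c, hc⟩] at hrow
        exact hrow
      have := congrArg ΦB.symm hΦ0
      simpa using this
    refine ⟨X, hXnull, fun j c => ?_⟩
    rw [hxd j c, hΦE]
    rfl
  · -- backward direction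
    rintro ⟨X, hXnull, hxe⟩
    have hxd : ∀ (j : Fin n) (c : {v : Fin b → ZMod 2 // v ≠ 0}),
        x (j, c) = (c : Fin b → ZMod 2) ⬝ᵥ ΦB (X j) := fun j c => by
      rw [hxe j c, hΦE]; rfl
    funext r
    rw [Pi.zero_apply]
    cases r with
    | inl ic =>
      obtain ⟨i, c⟩ := ic
      have h0 : (Hq *ᵥ X) i = 0 := by rw [hXnull]; rfl
      rw [hPMsum, hval X hxd i c, h0, map_zero, dotProduct_zero]
    | inr jcc =>
      obtain ⟨j₀, c₁, c₂⟩ := jcc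
      rw [hSsum]
      by_cases h12 : c₁ = c₂
      · rw [dif_pos h12]
      · rw [dif_neg h12, hxd, hxd, hxd]
        show ((c₁ : Fin b → ZMod 2) ⬝ᵥ ΦB (X j₀)) + ((c₂ : Fin b → ZMod 2) ⬝ᵥ ΦB (X j₀)) +
          (((c₁ : Fin b → ZMod 2) + (c₂ : Fin b → ZMod 2)) ⬝ᵥ ΦB (X j₀)) = 0
        rw [add_dotProduct]
        exact zmod2_add_self _
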